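/- Let m be a family of coefficients indexed by pairs λ1 ≥ λ2 ≥ 0, let f = Σ m(λ1,λ2)·S_{(λ1,λ2)}(x,y) ∈ ℚ[[x,y]], and let M'(f)(t,v) = Σ_{λ1≥λ2≥0} m(λ1,λ2)·t^{λ1−λ2}v^{λ2} ∈ ℚ[[t,v]] be its multiplicity series. Then in ℚ[[x,y]] one has the identity (x − y)·f(x,y) = x·M'(f)(x,xy) − y·M'(f)(y,xy), where M'(f)(x,xy) and M'(f)(y,xy) denote substitution of t := x (resp. t := y) and v := xy into M'(f) (both substituted series have zero constant term, so the substitutions are well defined). -/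

import Mathlib

open Finset

abbrev Q2 : Type := MvPowerSeries (Fin 2) ℚ

noncomputable def Xv (i : Fin 2) : Q2 := MvPowerSeries.X i

noncomputable def mon (i j : ℕ) : Fin 2 →₀ ℕ := Finsupp.single 0 i + Finsupp.single 1 j

noncomputable def c (i j : ℕ) (f : Q2) : ℚ := MvPowerSeries.coeff (mon i j) f

lemma mon_apply0 (i j : ℕ) : mon i j 0 = i := by simp [mon]
lemma mon_apply1 (i j : ℕ) : mon i j 1 = j := by simp [mon]
lemma eq_mon (e : Fin 2 →₀ ℕ) : e = mon (e 0) (e 1) := by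
  ext s
  fin_cases s
  · simp [mon_apply0]
  · simp [mon_apply1]
lemma mon_le_iff (a b i j : ℕ) : mon a b ≤ mon i j ↔ a ≤ i ∧ b ≤ j := by
  rw [Finsupp.le_def]
  constructor
  · intro hs
    exact ⟨by simpa [mon_apply0] using hs 0, by simpa [mon_apply1] using hs 1⟩
  · rintro ⟨h1, h2⟩ s
    fin_cases s
    · simpa [mon_apply0] using h1
    · simpa [mon_apply1] using h2
lemma mon_sub (a b i j : ℕ) : mon a b - mon i j = mon (a - i) (b - j) := by
  ext s
  fin_cases s
  · simp [Finsupp.tsub_apply, mon_apply0]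
  · simp [Finsupp.tsub_apply, mon_apply1]
lemma mon_inj_iff (a b i j : ℕ) : mon a b = mon i j ↔ a = i ∧ b = j := by
  constructor
  · intro hm
    exact ⟨by rw [← mon_apply0 a b, hm, mon_apply0], by rw [← mon_apply1 a b, hm, mon_apply1]⟩
  · rintro ⟨rfl, rfl⟩; rfl
lemma X0X1_pow (a b : ℕ) : Xv 0 ^ a * Xv 1 ^ b = MvPowerSeries.monomial (mon a b) 1 := by
  rw [Xv, Xv, MvPowerSeries.X_pow_eq, MvPowerSeries.X_pow_eq, MvPowerSeries.monomial_mul_monomial,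
    one_mul, mon]
lemma c_monXY (i j a b : ℕ) : c i j (Xv 0 ^ a * Xv 1 ^ b) = if i = a ∧ j = b then 1 else 0 := by
  rw [c, X0X1_pow, MvPowerSeries.coeff_monomial]
  split_ifs with h1 h2 h2
  · rfl
  · exact absurd ((mon_inj_iff i j a b).mp h1) h2
  · exact absurd ((mon_inj_iff i j a b).mpr h2) h1
  · rfl
lemma c_X0_mul (i j : ℕ) (g : Q2) : c i j (Xv 0 * g) = if 1 ≤ i then c (i-1) j g else 0 := by
  have : Xv 0 = MvPowerSeries.monomial (mon 1 0) 1 := by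
    simpa using X0X1_pow 1 0
  rw [c, this, MvPowerSeries.coeff_monomial_mul]
  split_ifs with h1 h2 h2
  · rw [one_mul, mon_sub, c]; norm_num
  · exact absurd ((mon_le_iff 1 0 i j).mp h1).1 h2
  · exact absurd ((mon_le_iff 1 0 i j).mpr ⟨h2, Nat.zero_le j⟩) h1
  · rfl
lemma c_X1_mul (i j : ℕ) (g : Q2) : c i j (Xv 1 * g) = if 1 ≤ j then c i (j-1) g else 0 := by
  have : Xv 1 = MvPowerSeries.monomial (mon 0 1) 1 := by
    simpa using X0X1_pow 0 1
  rw [c, this, MvPowerSeries.coeff_monomial_mul]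
  split_ifs with h1 h2 h2
  · rw [one_mul, mon_sub, c]; norm_num
  · exact absurd ((mon_le_iff 0 1 i j).mp h1).2 h2
  · exact absurd ((mon_le_iff 0 1 i j).mpr ⟨Nat.zero_le i, h2⟩) h1
  · rfl

/-- Schur function S_{(l1,l2)}(x,y) for l1 ≥ l2. -/
noncomputable def schur (l1 l2 : ℕ) : Q2 :=
  (Xv 0 * Xv 1) ^ l2 * ∑ i ∈ range (l1 - l2 + 1), Xv 0 ^ i * Xv 1 ^ (l1 - l2 - i)


lemma c_schur (a b l1 l2 : ℕ) (hle : l2 ≤ l1) :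
    c a b (schur l1 l2) = if l2 ≤ a ∧ a ≤ l1 ∧ a + b = l1 + l2 then 1 else 0 := by
  have key : ∀ i : ℕ, (Xv 0 * Xv 1) ^ l2 * (Xv 0 ^ i * Xv 1 ^ (l1 - l2 - i))
      = Xv 0 ^ (l2 + i) * Xv 1 ^ (l2 + (l1 - l2 - i)) := by
    intro i; rw [pow_add, pow_add, mul_pow]; ring
  rw [schur, Finset.mul_sum]
  unfold c
  rw [map_sum]
  have hco : ∀ i ∈ range (l1 - l2 + 1),
      MvPowerSeries.coeff (mon a b) ((Xv 0 * Xv 1) ^ l2 * (Xv 0 ^ i * Xv 1 ^ (l1 - l2 - i)))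
      = if a = l2 + i ∧ b = l2 + (l1 - l2 - i) then (1 : ℚ) else 0 := by
    intro i _
    rw [key i]
    exact c_monXY a b _ _
  rw [Finset.sum_congr rfl hco]
  by_cases hP : l2 ≤ a ∧ a ≤ l1 ∧ a + b = l1 + l2
  · obtain ⟨h1, h2, h3⟩ := hP
    rw [if_pos ⟨h1, h2, h3⟩, Finset.sum_eq_single (a - l2)]
    · rw [if_pos (by omega)]
    · intro i hi hne
      rw [if_neg (by omega)]
    · intro hmem
      exfalso
      simp only [mem_range] at hmem
      omega
  · rw [if_neg hP]
    apply Finset.sum_eq_zero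
    intro i hi
    simp only [mem_range] at hi
    rw [if_neg (by omega)]

/-- f = Σ_{l1 ≥ l2 ≥ 0} m(l1,l2) · S_{(l1,l2)}, expressed coefficientwise
(each coefficient receives only finitely many contributions, since `schur l1 l2`
is homogeneous of degree `l1 + l2`). -/
def IsSchurExpansion (m : ℕ → ℕ → ℚ) (f : Q2) : Prop :=
  ∀ i j : ℕ, c i j f =
    ∑ l1 ∈ range (i + j + 1), ∑ l2 ∈ range (l1 + 1), m l1 l2 * c i j (schur l1 l2)

/-- h(t,v) = Σ_{l1 ≥ l2 ≥ 0} m(l1,l2) t^{l1-l2} v^{l2}, the multiplicity series. -/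
def IsMultSeries (m : ℕ → ℕ → ℚ) (h : Q2) : Prop :=
  ∀ p q : ℕ, c p q h = m (p + q) q

/-- Substitution of φ0, φ1 (series with zero constant term) for the two variables of h:
the coefficient of a monomial e in h(φ0,φ1) only receives contributions from monomials
t^p v^q of h with p + q ≤ |e|. -/
noncomputable def subst2 (φ0 φ1 h : Q2) : Q2 :=
  fun e => ∑ p ∈ range (e 0 + e 1 + 1), ∑ q ∈ range (e 0 + e 1 + 1),
    MvPowerSeries.coeff (mon p q) h * MvPowerSeries.coeff e (φ0 ^ p * φ1 ^ q)


lemma c_subst0 (m : ℕ → ℕ → ℚ) (h : Q2) (hh : IsMultSeries m h) (i j : ℕ) :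
    c i j (subst2 (Xv 0) (Xv 0 * Xv 1) h) = if j ≤ i then m i j else 0 := by
  have : c i j (subst2 (Xv 0) (Xv 0 * Xv 1) h)
      = ∑ p ∈ range (i + j + 1), ∑ q ∈ range (i + j + 1),
        m (p + q) q * (if i = p + q ∧ j = q then (1:ℚ) else 0) := by
    rw [c, MvPowerSeries.coeff_apply, subst2]
    simp only [mon_apply0, mon_apply1]
    refine Finset.sum_congr rfl fun p _ => Finset.sum_congr rfl fun q _ => ?_
    have hxy : Xv 0 ^ p * (Xv 0 * Xv 1) ^ q = Xv 0 ^ (p + q) * Xv 1 ^ q := by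
      rw [pow_add]; ring
    rw [hxy]
    rw [show MvPowerSeries.coeff (mon p q) h = m (p+q) q from hh p q]
    rw [show MvPowerSeries.coeff (mon i j) (Xv 0 ^ (p+q) * Xv 1 ^ q)
        = if i = p + q ∧ j = q then (1:ℚ) else 0 from c_monXY i j _ _]
  rw [this]
  by_cases hji : j ≤ i
  · rw [if_pos hji, Finset.sum_eq_single (i - j)]
    · rw [Finset.sum_eq_single j]
      · rw [if_pos (by omega), mul_one, show i - j + j = i by omega]
      · intro q _ hq; rw [if_neg (by omega), mul_zero]
      · intro hmem; exfalso; simp only [mem_range] at hmem; omega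
    · intro p _ hp
      apply Finset.sum_eq_zero
      intro q _
      rw [if_neg (by omega), mul_zero]
    · intro hmem; exfalso; simp only [mem_range] at hmem; omega
  · rw [if_neg hji]
    apply Finset.sum_eq_zero; intro p _
    apply Finset.sum_eq_zero; intro q _
    rw [if_neg (by omega), mul_zero]
lemma c_subst1 (m : ℕ → ℕ → ℚ) (h : Q2) (hh : IsMultSeries m h) (i j : ℕ) :
    c i j (subst2 (Xv 1) (Xv 0 * Xv 1) h) = if i ≤ j then m j i else 0 := by
  have : c i j (subst2 (Xv 1) (Xv 0 * Xv 1) h)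
      = ∑ p ∈ range (i + j + 1), ∑ q ∈ range (i + j + 1),
        m (p + q) q * (if i = q ∧ j = p + q then (1:ℚ) else 0) := by
    rw [c, MvPowerSeries.coeff_apply, subst2]
    simp only [mon_apply0, mon_apply1]
    refine Finset.sum_congr rfl fun p _ => Finset.sum_congr rfl fun q _ => ?_
    have hxy : Xv 1 ^ p * (Xv 0 * Xv 1) ^ q = Xv 0 ^ q * Xv 1 ^ (p + q) := by
      rw [pow_add]; ring
    rw [hxy]
    rw [show MvPowerSeries.coeff (mon p q) h = m (p+q) q from hh p q]
    rw [show MvPowerSeries.coeff (mon i j) (Xv 0 ^ q * Xv 1 ^ (p+q))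
        = if i = q ∧ j = p + q then (1:ℚ) else 0 from c_monXY i j _ _]
  rw [this]
  by_cases hij : i ≤ j
  · rw [if_pos hij, Finset.sum_eq_single (j - i)]
    · rw [Finset.sum_eq_single i]
      · rw [if_pos (by omega), mul_one, show j - i + i = j by omega]
      · intro q _ hq; rw [if_neg (by omega), mul_zero]
      · intro hmem; exfalso; simp only [mem_range] at hmem; omega
    · intro p _ hp
      apply Finset.sum_eq_zero
      intro q _
      rw [if_neg (by omega), mul_zero]
    · intro hmem; exfalso; simp only [mem_range] at hmem; omega
  · rw [if_neg hij]
    apply Finset.sum_eq_zero; intro p _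
    apply Finset.sum_eq_zero; intro q _
    rw [if_neg (by omega), mul_zero]

lemma c_sub (i j : ℕ) (g1 g2 : Q2) : c i j (g1 - g2) = c i j g1 - c i j g2 := by
  simp [c]

lemma coeff_c (i j : ℕ) (g : Q2) : MvPowerSeries.coeff (mon i j) g = c i j g := rfl

lemma c_f (m : ℕ → ℕ → ℚ) (f : Q2) (hf : IsSchurExpansion m f) (a b : ℕ) :
    c a b f = ∑ l1 ∈ range (a + b + 1),
      (if a ≤ l1 ∧ b ≤ l1 then m l1 (a + b - l1) else 0) := by
  rw [hf a b]
  refine Finset.sum_congr rfl fun l1 hl1 => ?_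
  simp only [mem_range] at hl1
  have hco : ∀ l2 ∈ range (l1 + 1),
      m l1 l2 * c a b (schur l1 l2)
      = m l1 l2 * (if l2 ≤ a ∧ a ≤ l1 ∧ a + b = l1 + l2 then (1:ℚ) else 0) := by
    intro l2 hl2
    simp only [mem_range] at hl2
    rw [c_schur a b l1 l2 (by omega)]
  rw [Finset.sum_congr rfl hco]
  by_cases hP : a ≤ l1 ∧ b ≤ l1
  · rw [if_pos hP]
    obtain ⟨h1, h2⟩ := hP
    rw [Finset.sum_eq_single (a + b - l1)]
    · rw [if_pos (by omega), mul_one]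
    · intro l2 _ hne; rw [if_neg (by omega), mul_zero]
    · intro hmem; exfalso; simp only [mem_range] at hmem; omega
  · rw [if_neg hP]
    apply Finset.sum_eq_zero
    intro l2 hl2
    simp only [mem_range] at hl2
    rw [if_neg (by omega), mul_zero]
lemma final_arith (m : ℕ → ℕ → ℚ) (a b : ℕ) :
    (if 1 ≤ a then ∑ l1 ∈ range (a - 1 + b + 1),
        (if a - 1 ≤ l1 ∧ b ≤ l1 then m l1 (a - 1 + b - l1) else 0) else 0)
    - (if 1 ≤ b then ∑ l1 ∈ range (a + (b - 1) + 1),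
        (if a ≤ l1 ∧ b - 1 ≤ l1 then m l1 (a + (b - 1) - l1) else 0) else 0)
    = (if 1 ≤ a then (if b ≤ a - 1 then m (a - 1) b else 0) else 0)
    - (if 1 ≤ b then (if a ≤ b - 1 then m (b - 1) a else 0) else 0) := by
  rcases Nat.eq_zero_or_pos a with ha | ha
  · subst ha
    simp only [if_neg (by omega : ¬ (1:ℕ) ≤ 0)]
    rcases Nat.eq_zero_or_pos b with hb | hb
    · subst hb; simp
    · rw [if_pos (show 1 ≤ b by omega), if_pos (show 1 ≤ b by omega), if_pos (Nat.zero_le (b-1))]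
      congr 1
      rw [Finset.sum_eq_single (b - 1)]
      · rw [if_pos (by omega)]
        congr 1; omega
      · intro l1 hl1 hne; simp only [mem_range] at hl1; rw [if_neg (by omega)]
      · intro hmem; exfalso; simp only [mem_range] at hmem; omega
  · rcases Nat.eq_zero_or_pos b with hb | hb
    · subst hb
      simp only [if_neg (by omega : ¬ (1:ℕ) ≤ 0)]
      rw [if_pos (show 1 ≤ a by omega), if_pos (show 1 ≤ a by omega), if_pos (Nat.zero_le (a-1))]
      congr 1
      rw [Finset.sum_eq_single (a - 1)]
      · rw [if_pos (by omega)]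
        congr 1; omega
      · intro l1 hl1 hne; simp only [mem_range] at hl1; rw [if_neg (by omega)]
      · intro hmem; exfalso; simp only [mem_range] at hmem; omega
    · rw [if_pos (show 1 ≤ a by omega), if_pos (show 1 ≤ a by omega), if_pos (show 1 ≤ b by omega), if_pos (show 1 ≤ b by omega)]
      have hr1 : a - 1 + b + 1 = a + b := by omega
      have hr2 : a + (b - 1) + 1 = a + b := by omega
      rw [hr1, hr2, ← Finset.sum_sub_distrib]
      have hterm : ∀ l1 ∈ range (a + b),
          (if a - 1 ≤ l1 ∧ b ≤ l1 then m l1 (a - 1 + b - l1) else 0)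
          - (if a ≤ l1 ∧ b - 1 ≤ l1 then m l1 (a + (b - 1) - l1) else 0)
          = (if a - 1 ≤ l1 ∧ b ≤ l1 then m l1 (a + b - 1 - l1) else 0)
          - (if a ≤ l1 ∧ b - 1 ≤ l1 then m l1 (a + b - 1 - l1) else 0) := by
        intro l1 _
        rw [show a - 1 + b - l1 = a + b - 1 - l1 by omega,
            show a + (b - 1) - l1 = a + b - 1 - l1 by omega]
      rw [Finset.sum_congr rfl hterm]
      rcases lt_trichotomy a b with hab | hab | hab
      · rw [if_neg (by omega), if_pos (by omega), Finset.sum_eq_single (b - 1)]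
        · rw [show a + b - 1 - (b - 1) = a by omega, if_neg (by omega), if_pos (by omega)]
        · intro l1 hl1 hne; simp only [mem_range] at hl1
          split_ifs with h1 h2 h2 <;> first | (exfalso; omega) | ring1
        · intro hmem; exfalso; simp only [mem_range] at hmem; omega
      · rw [if_neg (by omega), if_neg (by omega)]
        rw [Finset.sum_eq_zero, sub_zero]
        intro l1 hl1; simp only [mem_range] at hl1
        split_ifs with h1 h2 h2 <;> first | (exfalso; omega) | ring1
      · rw [if_pos (by omega), if_neg (by omega), Finset.sum_eq_single (a - 1)]
        · rw [show a + b - 1 - (a - 1) = b by omega, if_pos (by omega), if_neg (by omega)]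
        · intro l1 hl1 hne; simp only [mem_range] at hl1
          split_ifs with h1 h2 h2 <;> first | (exfalso; omega) | ring1
        · intro hmem; exfalso; simp only [mem_range] at hmem; omega

/-- Substitution of a series φ with zero constant term into a one-variable series a. -/
noncomputable def substP (φ : Q2) (a : PowerSeries ℚ) : Q2 :=
  fun e => ∑ k ∈ range (e 0 + e 1 + 1),
    PowerSeries.coeff k a * MvPowerSeries.coeff e (φ ^ k)

/-- identity (2) of the paper:
(x − y)·f(x,y) = x·M'(f)(x,xy) − y·M'(f)(y,xy). -/
theorem multiplicity_series_identity
    (m : ℕ → ℕ → ℚ) (f h : Q2)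
    (hf : IsSchurExpansion m f) (hh : IsMultSeries m h) :
    (Xv 0 - Xv 1) * f
      = Xv 0 * subst2 (Xv 0) (Xv 0 * Xv 1) h - Xv 1 * subst2 (Xv 1) (Xv 0 * Xv 1) h := by
  apply MvPowerSeries.ext
  intro e
  obtain ⟨a, b, rfl⟩ : ∃ a b, e = mon a b := ⟨e 0, e 1, eq_mon e⟩
  rw [coeff_c, coeff_c, sub_mul, c_sub, c_sub, c_X0_mul, c_X1_mul, c_X0_mul, c_X1_mul,
    c_subst0 m h hh, c_subst1 m h hh, c_f m f hf, c_f m f hf]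
  exact final_arith m a b
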